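/- arXiv:2508.08191 — 3 statements merged into one kernel-verified Lean document; each statement's English description precedes it below -/
import Mathlib

section
/- Suppose a = δ_{g₀} ⋆ ã for some g₀ ∈ G and ã : G → 𝔽₂, i.e. A = T_{g₀} · Ã where T_{g₀} = circ(δ_{g₀}) is the translation permutation matrix and Ã = circ(ã) (this is the paper's condition that the polynomial A has a common monomial factor, A = αᵀÃ). Let H̃_X, H̃_Z be the TT code matrices built from (ã, b, c) and H_X, H_Z those built from (a, b, c). Then rank(H̃_X) = rank(H_X) and rank(H̃_Z) = rank(H_Z); hence the number of logical qubits k = 3N − rank(H_X) − rank(H_Z) is unchanged. -/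
open Matrix

/-- Convolution of functions `G → 𝔽₂`: `(P ⋆ Q)(x) = ∑_y P(y)·Q(x − y)`. -/
def conv {G : Type*} [AddCommGroup G] [Fintype G] (P Q : G → ZMod 2) : G → ZMod 2 :=
  fun x => ∑ y, P y * Q (x - y)

/-- The indicator function `δ_{g₀}` of `g₀ ∈ G`. -/
def delta {G : Type*} [DecidableEq G] (g₀ : G) : G → ZMod 2 :=
  fun x => if x = g₀ then 1 else 0

/-- `H_X = [circ(p) circ(q) circ(r)]`. -/
def TT_HX {G : Type*} [AddCommGroup G] (p q r : G → ZMod 2) :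
    Matrix G (Fin 3 × G) (ZMod 2) :=
  Matrix.of fun g i =>
    ![Matrix.circulant p, Matrix.circulant q, Matrix.circulant r] i.1 g i.2

/-- `H_Z = [[0, circ(r)ᵀ, circ(q)ᵀ], [circ(r)ᵀ, 0, circ(p)ᵀ], [circ(q)ᵀ, circ(p)ᵀ, 0]]`. -/
def TT_HZ {G : Type*} [AddCommGroup G] (p q r : G → ZMod 2) :
    Matrix (Fin 3 × G) (Fin 3 × G) (ZMod 2) :=
  Matrix.of fun i j =>
    ![![0, (Matrix.circulant r)ᵀ, (Matrix.circulant q)ᵀ],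
      ![(Matrix.circulant r)ᵀ, 0, (Matrix.circulant p)ᵀ],
      ![(Matrix.circulant q)ᵀ, (Matrix.circulant p)ᵀ, 0]] i.1 j.1 i.2 j.2

set_option linter.unusedSectionVars false

section Aux
variable {G : Type*} [AddCommGroup G] [Fintype G] [DecidableEq G]

lemma circulant_conv (v w : G → ZMod 2) :
    Matrix.circulant (conv v w) = Matrix.circulant v * Matrix.circulant w := by
  ext i j
  simp only [Matrix.mul_apply, Matrix.circulant_apply, conv]
  refine Fintype.sum_equiv (Equiv.subLeft i) _ _ fun y => ?_
  simp [Equiv.subLeft, sub_sub_cancel, sub_right_comm]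

lemma delta_conv_delta (x y : G) : conv (delta x) (delta y) = delta (x + y) := by
  funext t
  simp only [conv, delta]
  rw [Finset.sum_eq_single x]
  · simp [sub_eq_iff_eq_add']
  · intro b _ hb; simp [hb]
  · simp

lemma circulant_delta_zero : Matrix.circulant (delta (0:G)) = 1 := by
  ext i j
  simp [Matrix.circulant_apply, delta, Matrix.one_apply, sub_eq_zero]

/-- Row of three square blocks. -/
def RB (A : Fin 3 → Matrix G G (ZMod 2)) : Matrix G (Fin 3 × G) (ZMod 2) :=
  Matrix.of fun g i => A i.1 g i.2

/-- 3×3 block matrix. -/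
def BB (B : Fin 3 → Fin 3 → Matrix G G (ZMod 2)) :
    Matrix (Fin 3 × G) (Fin 3 × G) (ZMod 2) :=
  Matrix.of fun p q => B p.1 q.1 p.2 q.2

lemma RB_mul_BB (A : Fin 3 → Matrix G G (ZMod 2))
    (C : Fin 3 → Fin 3 → Matrix G G (ZMod 2)) :
    RB A * BB C = RB (fun j => ∑ k, A k * C k j) := by
  ext g ⟨j, h⟩
  simp [RB, BB, Matrix.mul_apply, Fintype.sum_prod_type, Matrix.sum_apply]

lemma BB_mul_BB (B C : Fin 3 → Fin 3 → Matrix G G (ZMod 2)) :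
    BB B * BB C = BB (fun i j => ∑ k, B i k * C k j) := by
  ext ⟨i, g⟩ ⟨j, h⟩
  simp [BB, Matrix.mul_apply, Fintype.sum_prod_type, Matrix.sum_apply]

/-- Block diagonal. -/
def Dg (M : Fin 3 → Matrix G G (ZMod 2)) : Matrix (Fin 3 × G) (Fin 3 × G) (ZMod 2) :=
  BB (fun i j => if i = j then M i else 0)

lemma Dg_mul_Dg (M N : Fin 3 → Matrix G G (ZMod 2)) :
    Dg M * Dg N = Dg (fun i => M i * N i) := by
  rw [Dg, Dg, BB_mul_BB]
  unfold Dg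
  exact congrArg BB (by funext i j; fin_cases i <;> fin_cases j <;> simp [Fin.sum_univ_three])

lemma Dg_one : Dg (fun _ => (1 : Matrix G G (ZMod 2))) = 1 := by
  ext ⟨i, g⟩ ⟨j, h⟩
  by_cases hij : i = j
  · subst hij
    simp [Dg, BB, Matrix.one_apply, Prod.ext_iff]
  · simp [Dg, BB, Matrix.one_apply, Prod.ext_iff, hij]

lemma rank_mul_right_of_inv {m : Type*} [Fintype m] (A : Matrix m (Fin 3 × G) (ZMod 2))
    (B B' : Matrix (Fin 3 × G) (Fin 3 × G) (ZMod 2)) (hB : B * B' = 1) :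
    (A * B).rank = A.rank := by
  refine le_antisymm (Matrix.rank_mul_le_left A B) ?_
  have : A = A * B * B' := by rw [Matrix.mul_assoc, hB, Matrix.mul_one]
  calc A.rank = (A * B * B').rank := by rw [← this]
    _ ≤ (A * B).rank := Matrix.rank_mul_le_left _ _

lemma rank_mul_left_of_inv (B B' : Matrix (Fin 3 × G) (Fin 3 × G) (ZMod 2))
    (A : Matrix (Fin 3 × G) (Fin 3 × G) (ZMod 2)) (hB : B' * B = 1) :
    (B * A).rank = A.rank := by
  refine le_antisymm (Matrix.rank_mul_le_right B A) ?_
  have : A = B' * (B * A) := by rw [← Matrix.mul_assoc, hB, Matrix.one_mul]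
  calc A.rank = (B' * (B * A)).rank := by rw [← this]
    _ ≤ (B * A).rank := Matrix.rank_mul_le_right _ _

end Aux

/-- If `a = δ_{g₀} ⋆ a'` (the polynomial `a` has a common monomial factor) then the
TT codes built from `(a', b, c)` and from `(a, b, c)` have equal `rank(H_X)` and
equal `rank(H_Z)`; hence the number of logical qubits
`k = 3N − rank(H_X) − rank(H_Z)` is unchanged. -/
theorem tt_rank_invariant_of_monomial_factor {G : Type*} [AddCommGroup G]
    [Fintype G] [DecidableEq G] (a a' b c : G → ZMod 2) (g₀ : G)
    (h : a = conv (delta g₀) a') :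
    (TT_HX a' b c).rank = (TT_HX a b c).rank ∧
      (TT_HZ a' b c).rank = (TT_HZ a b c).rank ∧
      (3 * (Fintype.card G : ℤ)) - ((TT_HX a' b c).rank : ℤ) - ((TT_HZ a' b c).rank : ℤ) =
        (3 * (Fintype.card G : ℤ)) - ((TT_HX a b c).rank : ℤ) - ((TT_HZ a b c).rank : ℤ) := by
  set T : Matrix G G (ZMod 2) := Matrix.circulant (delta g₀) with hT
  set T' : Matrix G G (ZMod 2) := Matrix.circulant (delta (-g₀)) with hT'
  have hTT' : T * T' = 1 := by
    rw [hT, hT', ← circulant_conv, delta_conv_delta, add_neg_cancel, circulant_delta_zero]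
  have hT'T : T' * T = 1 := by
    rw [hT, hT', ← circulant_conv, delta_conv_delta, neg_add_cancel, circulant_delta_zero]
  have hA : Matrix.circulant a = T * Matrix.circulant a' := by
    rw [h, circulant_conv]
  -- commuting circulants
  have comm : ∀ v : G → ZMod 2, T' * Matrix.circulant v = Matrix.circulant v * T' :=
    fun v => Matrix.circulant_mul_comm _ _
  have commT : ∀ v : G → ZMod 2, Matrix.circulant v * T = T * Matrix.circulant v :=
    fun v => Matrix.circulant_mul_comm _ _
  have conj : ∀ v : G → ZMod 2, T' * Matrix.circulant v * T = Matrix.circulant v := by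
    intro v
    rw [comm v, Matrix.mul_assoc, hT'T, Matrix.mul_one]
  have conj' : ∀ v : G → ZMod 2,
      T' * (Matrix.circulant v * T) = Matrix.circulant v := by
    intro v; rw [← Matrix.mul_assoc, conj]
  have hTtrans : Tᵀ = T' := by
    rw [hT, hT', Matrix.transpose_circulant]
    exact congrArg Matrix.circulant (by funext x; simp [delta, neg_eq_iff_eq_neg])
  have hAtrans : (Matrix.circulant a)ᵀ = T' * (Matrix.circulant a')ᵀ := by
    rw [hA, Matrix.transpose_mul, hTtrans, Matrix.transpose_circulant, comm]
  have hAtrans2 : Matrix.circulant (fun i => a (-i))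
      = T' * Matrix.circulant (fun i => a' (-i)) := by
    rw [← Matrix.transpose_circulant, ← Matrix.transpose_circulant, hAtrans]
  -- right multiplier for H_X, and the two multipliers for H_Z
  have hDR : Dg ![T, 1, 1] * Dg ![T', 1, 1] = (1 : Matrix (Fin 3 × G) (Fin 3 × G) (ZMod 2)) := by
    rw [Dg_mul_Dg, ← Dg_one]
    exact congrArg Dg (by funext i; fin_cases i <;> simp [hTT'])
  have hDR' : Dg ![T', 1, 1] * Dg ![T, 1, 1] = (1 : Matrix (Fin 3 × G) (Fin 3 × G) (ZMod 2)) := by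
    rw [Dg_mul_Dg, ← Dg_one]
    exact congrArg Dg (by funext i; fin_cases i <;> simp [hT'T])
  have hDL : Dg ![(1 : Matrix G G (ZMod 2)), T, T] * Dg ![1, T', T'] = 1 := by
    rw [Dg_mul_Dg, ← Dg_one]
    exact congrArg Dg (by funext i; fin_cases i <;> simp [hTT'])
  -- H_X factorization
  have hx : TT_HX a b c = TT_HX a' b c * Dg ![T, 1, 1] := by
    show RB ![Matrix.circulant a, Matrix.circulant b, Matrix.circulant c]
      = RB ![Matrix.circulant a', Matrix.circulant b, Matrix.circulant c] * Dg ![T, 1, 1]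
    rw [Dg, RB_mul_BB]
    exact congrArg RB (by
      funext j; fin_cases j <;> simp [Fin.sum_univ_three, hA, commT])
  -- H_Z factorization
  have hz : TT_HZ a b c = Dg ![1, T', T'] * TT_HZ a' b c * Dg ![T, 1, 1] := by
    show BB ![![0, (Matrix.circulant c)ᵀ, (Matrix.circulant b)ᵀ],
        ![(Matrix.circulant c)ᵀ, 0, (Matrix.circulant a)ᵀ],
        ![(Matrix.circulant b)ᵀ, (Matrix.circulant a)ᵀ, 0]]
      = Dg ![1, T', T'] * BB ![![0, (Matrix.circulant c)ᵀ, (Matrix.circulant b)ᵀ],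
        ![(Matrix.circulant c)ᵀ, 0, (Matrix.circulant a')ᵀ],
        ![(Matrix.circulant b)ᵀ, (Matrix.circulant a')ᵀ, 0]] * Dg ![T, 1, 1]
    rw [Dg, Dg, BB_mul_BB, BB_mul_BB]
    exact congrArg BB (by
      funext i j
      fin_cases i <;> fin_cases j <;>
        simp [Fin.sum_univ_three, Matrix.transpose_circulant, hAtrans2, conj])
  have hxr : (TT_HX a' b c).rank = (TT_HX a b c).rank := by
    rw [hx, rank_mul_right_of_inv _ _ _ hDR]
  have hzr : (TT_HZ a' b c).rank = (TT_HZ a b c).rank := by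
    rw [hz, rank_mul_right_of_inv _ _ _ hDR,
      rank_mul_left_of_inv _ (Dg ![(1 : Matrix G G (ZMod 2)), T, T]) _ hDL]
  exact ⟨hxr, hzr, by rw [hxr, hzr]⟩
end

section
/- Suppose a = δ_{g₀} ⋆ ã for some g₀ ∈ G and ã : G → 𝔽₂ (A = T_{g₀} · Ã). Let H̃_X, H̃_Z be the TT code matrices built from (ã, b, c) and H_X, H_Z those built from (a, b, c). Then the set of Hamming weights of vectors in ker(H_X) \ rs(H_Z) equals the set of Hamming weights of vectors in ker(H̃_X) \ rs(H̃_Z). Consequently the Z-distance d_Z (and hence the meta-check distance d_M) is unchanged when the common monomial factor is removed from A. -/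
open Matrix

/-- Row space `rs(M)`: the span of the rows of `M`. -/
def rowSpace {m n : Type*} (M : Matrix m n (ZMod 2)) : Submodule (ZMod 2) (n → ZMod 2) :=
  Submodule.span (ZMod 2) (Set.range fun i => M i)

/-- The coordinate permutation of `Fin 3 × G` shifting the first block by `g₁`. -/
def shiftE {G : Type*} [AddGroup G] (g₁ : G) : Fin 3 × G ≃ Fin 3 × G where
  toFun x := (x.1, if x.1 = 0 then x.2 - g₁ else x.2)
  invFun x := (x.1, if x.1 = 0 then x.2 + g₁ else x.2)
  left_inv x := by obtain ⟨i, g⟩ := x; dsimp; split <;> simp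
  right_inv x := by obtain ⟨i, g⟩ := x; dsimp; split <;> simp

lemma shiftE_shiftE_neg {G : Type*} [AddGroup G] (g₁ : G) (x : Fin 3 × G) :
    shiftE g₁ (shiftE (-g₁) x) = x := by
  obtain ⟨i, g⟩ := x; simp only [shiftE, Equiv.coe_fn_mk]; split <;> simp

lemma hammingNorm_comp_equiv {α β : Type*} [Fintype α] [Fintype β] [DecidableEq α] [DecidableEq β]
    (e : α ≃ β) (v : β → ZMod 2) : hammingNorm (fun x => v (e x)) = hammingNorm v := by
  simp only [hammingNorm]
  exact Finset.card_bij (fun a _ => e a) (fun a ha => by simpa using ha)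
    (fun a _ b _ hab => e.injective hab)
    (fun b hb => ⟨e.symm b, by simpa using hb, by simp⟩)

lemma HX_shift {G : Type*} [AddCommGroup G] [Fintype G] (p p' q r : G → ZMod 2) (g₁ : G)
    (hp : ∀ x, p x = p' (x - g₁)) (v : Fin 3 × G → ZMod 2) :
    (TT_HX p' q r).mulVec (fun x => v (shiftE g₁ x)) = (TT_HX p q r).mulVec v := by
  funext g
  simp only [Matrix.mulVec, dotProduct, Fintype.sum_prod_type, Fin.sum_univ_three, TT_HX,
    Matrix.of_apply, Matrix.cons_val_zero, Matrix.cons_val_one, Matrix.head_cons,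
    Matrix.cons_val_two, Matrix.tail_cons, shiftE, Equiv.coe_fn_mk, circulant_apply,
    if_pos, reduceIte]
  congr 2
  rw [← Equiv.sum_comp (Equiv.addRight g₁) (fun h => p' (g - h) * v (0, h - g₁))]
  refine Finset.sum_congr rfl fun h _ => ?_
  simp [Equiv.addRight, hp, sub_add_eq_sub_sub]

lemma HZ_row_shift {G : Type*} [AddCommGroup G] (p p' q r : G → ZMod 2) (g₁ : G)
    (hp : ∀ x, p x = p' (x - g₁)) (i : Fin 3) (g : G) :
    (fun x => TT_HZ p q r (i, g) (shiftE g₁ x)) =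
      TT_HZ p' q r (i, if i = 0 then g else g + g₁) := by
  funext x
  obtain ⟨j, h⟩ := x
  fin_cases i <;> fin_cases j <;>
    simp [TT_HZ, shiftE, circulant_apply, hp, sub_sub, add_comm]

lemma HZ_mem_shift {G : Type*} [AddCommGroup G] [Fintype G] (p p' q r : G → ZMod 2) (g₁ : G)
    (hp : ∀ x, p x = p' (x - g₁)) (v : Fin 3 × G → ZMod 2)
    (hv : v ∈ rowSpace (TT_HZ p q r)) :
    (fun x => v (shiftE g₁ x)) ∈ rowSpace (TT_HZ p' q r) := by
  have hm := Submodule.mem_map_of_mem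
    (f := LinearMap.funLeft (ZMod 2) (ZMod 2) (shiftE g₁)) hv
  rw [rowSpace, Submodule.map_span] at hm
  refine Submodule.span_mono ?_ hm
  rintro _ ⟨_, ⟨⟨i, g⟩, rfl⟩, rfl⟩
  exact ⟨(i, if i = 0 then g else g + g₁), (HZ_row_shift p p' q r g₁ hp i g).symm⟩

lemma tt_set_subset {G : Type*} [AddCommGroup G] [Fintype G] [DecidableEq G]
    (p p' b c : G → ZMod 2) (g₁ : G) (hp : ∀ x, p x = p' (x - g₁)) :
    {w : ℕ | ∃ v : Fin 3 × G → ZMod 2,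
        ((TT_HX p b c).mulVec v = 0 ∧ v ∉ rowSpace (TT_HZ p b c)) ∧
          hammingNorm v = w} ⊆
      {w : ℕ | ∃ v : Fin 3 × G → ZMod 2,
        ((TT_HX p' b c).mulVec v = 0 ∧ v ∉ rowSpace (TT_HZ p' b c)) ∧
          hammingNorm v = w} := by
  have hp' : ∀ x, p' x = p (x - (-g₁)) := by
    intro x; rw [sub_neg_eq_add, hp, add_sub_cancel_right]
  rintro w ⟨v, ⟨hk, hr⟩, hw⟩
  refine ⟨fun x => v (shiftE g₁ x), ⟨?_, ?_⟩, ?_⟩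
  · rw [HX_shift p p' b c g₁ hp v, hk]
  · intro hmem
    apply hr
    have := HZ_mem_shift p' p b c (-g₁) hp' _ hmem
    have heq : (fun x => v (shiftE g₁ (shiftE (-g₁) x))) = v := by
      funext x; rw [shiftE_shiftE_neg]
    rwa [heq] at this
  · rw [hammingNorm_comp_equiv]; exact hw

/-- If `a = δ_{g₀} ⋆ ã` then the set of Hamming weights of vectors in
`ker(H_X) \ rs(H_Z)` is the same for the TT codes built from `(a, b, c)` and
from `(ã, b, c)`; consequently the `Z`-distance `d_Z` (and hence the meta-check
distance `d_M`) is unchanged when the common monomial factor is removed. -/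
theorem tt_dZ_invariant_of_monomial_factor {G : Type*} [AddCommGroup G]
    [Fintype G] [DecidableEq G] (a a' b c : G → ZMod 2) (g₀ : G)
    (h : a = conv (delta g₀) a') :
    {w : ℕ | ∃ v : Fin 3 × G → ZMod 2,
        ((TT_HX a b c).mulVec v = 0 ∧ v ∉ rowSpace (TT_HZ a b c)) ∧
          hammingNorm v = w} =
      {w : ℕ | ∃ v : Fin 3 × G → ZMod 2,
        ((TT_HX a' b c).mulVec v = 0 ∧ v ∉ rowSpace (TT_HZ a' b c)) ∧
          hammingNorm v = w} ∧
    sInf {w : ℕ | ∃ v : Fin 3 × G → ZMod 2,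
        ((TT_HX a b c).mulVec v = 0 ∧ v ∉ rowSpace (TT_HZ a b c)) ∧
          hammingNorm v = w} =
      sInf {w : ℕ | ∃ v : Fin 3 × G → ZMod 2,
        ((TT_HX a' b c).mulVec v = 0 ∧ v ∉ rowSpace (TT_HZ a' b c)) ∧
          hammingNorm v = w} := by
  have ha : ∀ x, a x = a' (x - g₀) := by
    intro x; rw [h]; simp [conv, delta]
  have ha' : ∀ x, a' x = a (x - (-g₀)) := by
    intro x; rw [sub_neg_eq_add, ha, add_sub_cancel_right]
  have hset := Set.Subset.antisymm (tt_set_subset a a' b c g₀ ha)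
    (tt_set_subset a' a b c (-g₀) ha')
  exact ⟨hset, by rw [hset]⟩
end

section
/- Suppose a = δ_{g₀} ⋆ ã for some g₀ ∈ G and ã : G → 𝔽₂ (A = T_{g₀} · Ã). Let H̃_X, H̃_Z be the TT code matrices built from (ã, b, c) and H_X, H_Z those built from (a, b, c). Then the set of Hamming weights of vectors in ker(H_Z) \ rs(H_X) equals the set of Hamming weights of vectors in ker(H̃_Z) \ rs(H̃_X). Consequently the X-distance d_X is unchanged when the common monomial factor is removed from A. -/
open Matrix

section Aux

set_option linter.unusedSectionVars false

variable {G : Type*} [AddCommGroup G] [Fintype G] [DecidableEq G]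

lemma conv_delta (g₀ : G) (a' : G → ZMod 2) (x : G) :
    conv (delta g₀) a' x = a' (x - g₀) := by
  simp [conv, delta]

/-- The index permutation shifting the second and third `G`-blocks by `g₀`. -/
def shiftEquiv (g₀ : G) : (Fin 3 × G) ≃ (Fin 3 × G) where
  toFun i := (i.1, i.2 + ![0, g₀, g₀] i.1)
  invFun i := (i.1, i.2 - ![0, g₀, g₀] i.1)
  left_inv := by rintro ⟨k, h⟩; simp
  right_inv := by rintro ⟨k, h⟩; simp

lemma hn_comp_equiv (e : (Fin 3 × G) ≃ (Fin 3 × G)) (v : Fin 3 × G → ZMod 2) :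
    hammingNorm (v ∘ e) = hammingNorm v := by
  simp only [hammingNorm]
  exact Finset.card_equiv e (by intro i; simp)

lemma row_comp (a a' b c : G → ZMod 2) (g₀ : G) (ha : ∀ x, a x = a' (x - g₀)) (g : G) :
    (TT_HX a b c g) ∘ (shiftEquiv g₀) = TT_HX a' b c (g - g₀) := by
  funext ⟨k, h⟩
  fin_cases k <;>
    simp [TT_HX, shiftEquiv, Matrix.circulant, ha, sub_sub, sub_right_comm, add_comm]

lemma map_rs (a a' b c : G → ZMod 2) (g₀ : G) (ha : ∀ x, a x = a' (x - g₀)) :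
    Submodule.map ((LinearEquiv.funCongrLeft (ZMod 2) (ZMod 2) (shiftEquiv g₀)
        : ((Fin 3 × G) → ZMod 2) ≃ₗ[ZMod 2] ((Fin 3 × G) → ZMod 2))
        : ((Fin 3 × G) → ZMod 2) →ₗ[ZMod 2] ((Fin 3 × G) → ZMod 2))
      (rowSpace (TT_HX a b c)) = rowSpace (TT_HX a' b c) := by
  rw [rowSpace, rowSpace, Submodule.map_span]
  congr 1
  ext w
  constructor
  · rintro ⟨u, ⟨g, rfl⟩, rfl⟩
    exact ⟨g - g₀, by simp only [← row_comp a a' b c g₀ ha g]; rfl⟩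
  · rintro ⟨g, rfl⟩
    exact ⟨TT_HX a b c (g + g₀), ⟨g + g₀, rfl⟩,
      by rw [show ((LinearEquiv.funCongrLeft (ZMod 2) (ZMod 2) (shiftEquiv g₀)
            : ((Fin 3 × G) → ZMod 2) →ₗ[ZMod 2] ((Fin 3 × G) → ZMod 2)))
          (TT_HX a b c (g + g₀)) = (TT_HX a b c (g + g₀)) ∘ (shiftEquiv g₀) from rfl,
        row_comp a a' b c g₀ ha, add_sub_cancel_right]⟩

lemma mem_rs_iff (a a' b c : G → ZMod 2) (g₀ : G) (ha : ∀ x, a x = a' (x - g₀))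
    (v : Fin 3 × G → ZMod 2) :
    v ∈ rowSpace (TT_HX a b c) ↔ v ∘ (shiftEquiv g₀) ∈ rowSpace (TT_HX a' b c) := by
  rw [← map_rs a a' b c g₀ ha, Submodule.mem_map]
  constructor
  · rintro hv; exact ⟨v, hv, rfl⟩
  · rintro ⟨u, hu, he⟩
    have : u = v := by
      have := congrArg (fun w => w ∘ (shiftEquiv g₀).symm) he
      simpa [Function.comp_assoc, Function.comp_def,
        LinearEquiv.funCongrLeft] using this
    rwa [this] at hu

lemma hz_mulVec0 (p q r : G → ZMod 2) (v : Fin 3 × G → ZMod 2) (g : G) :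
    (TT_HZ p q r).mulVec v (0, g) =
      (∑ h, r (h - g) * v (1, h)) + ∑ h, q (h - g) * v (2, h) := by
  simp only [Matrix.mulVec, dotProduct, TT_HZ, Fintype.sum_prod_type, Fin.sum_univ_three]
  simp [Matrix.circulant]

lemma hz_mulVec1 (p q r : G → ZMod 2) (v : Fin 3 × G → ZMod 2) (g : G) :
    (TT_HZ p q r).mulVec v (1, g) =
      (∑ h, r (h - g) * v (0, h)) + ∑ h, p (h - g) * v (2, h) := by
  simp only [Matrix.mulVec, dotProduct, TT_HZ, Fintype.sum_prod_type, Fin.sum_univ_three]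
  simp [Matrix.circulant]

lemma hz_mulVec2 (p q r : G → ZMod 2) (v : Fin 3 × G → ZMod 2) (g : G) :
    (TT_HZ p q r).mulVec v (2, g) =
      (∑ h, q (h - g) * v (0, h)) + ∑ h, p (h - g) * v (1, h) := by
  simp only [Matrix.mulVec, dotProduct, TT_HZ, Fintype.sum_prod_type, Fin.sum_univ_three]
  simp [Matrix.circulant]

lemma sum_shift (f : G → ZMod 2) (g₀ : G) : ∑ h, f (h + g₀) = ∑ h, f h :=
  Fintype.sum_equiv (Equiv.addRight g₀) _ _ (fun _ => rfl)

lemma ker_entry (a a' b c : G → ZMod 2) (g₀ : G) (ha : ∀ x, a x = a' (x - g₀))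
    (v : Fin 3 × G → ZMod 2) (k : Fin 3) (g : G) :
    (TT_HZ a' b c).mulVec (v ∘ shiftEquiv g₀) (k, g) =
      (TT_HZ a b c).mulVec v (k, g + ![g₀, 0, 0] k) := by
  fin_cases k
  · show (TT_HZ a' b c).mulVec (v ∘ shiftEquiv g₀) (0, g) =
        (TT_HZ a b c).mulVec v (0, g + ![g₀, 0, 0] 0)
    rw [hz_mulVec0, hz_mulVec0,
      ← sum_shift (fun h => c (h - (g + ![g₀, 0, 0] 0)) * v (1, h)) g₀,
      ← sum_shift (fun h => b (h - (g + ![g₀, 0, 0] 0)) * v (2, h)) g₀]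
    congr 1 <;> refine Finset.sum_congr rfl fun h _ => ?_ <;>
      simp [shiftEquiv] <;> rw [show h + g₀ - (g + g₀) = h - g by abel]
  · show (TT_HZ a' b c).mulVec (v ∘ shiftEquiv g₀) (1, g) =
        (TT_HZ a b c).mulVec v (1, g + ![g₀, 0, 0] 1)
    rw [hz_mulVec1, hz_mulVec1,
      ← sum_shift (fun h => a (h - (g + ![g₀, 0, 0] 1)) * v (2, h)) g₀]
    congr 1 <;> refine Finset.sum_congr rfl fun h _ => ?_ <;>
      simp [shiftEquiv, ha] <;> exact Or.inl (by rw [show h + g₀ - g - g₀ = h - g by abel])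
  · show (TT_HZ a' b c).mulVec (v ∘ shiftEquiv g₀) (2, g) =
        (TT_HZ a b c).mulVec v (2, g + ![g₀, 0, 0] 2)
    rw [hz_mulVec2, hz_mulVec2,
      ← sum_shift (fun h => a (h - (g + ![g₀, 0, 0] 2)) * v (1, h)) g₀]
    congr 1 <;> refine Finset.sum_congr rfl fun h _ => ?_ <;>
      simp [shiftEquiv, ha] <;> exact Or.inl (by rw [show h + g₀ - g - g₀ = h - g by abel])

lemma ker_iff (a a' b c : G → ZMod 2) (g₀ : G) (ha : ∀ x, a x = a' (x - g₀))
    (v : Fin 3 × G → ZMod 2) :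
    (TT_HZ a b c).mulVec v = 0 ↔ (TT_HZ a' b c).mulVec (v ∘ shiftEquiv g₀) = 0 := by
  constructor
  · intro hv
    funext ⟨k, g⟩
    rw [ker_entry a a' b c g₀ ha v k g]
    exact congrFun hv _
  · intro hv
    funext ⟨k, g⟩
    have := ker_entry a a' b c g₀ ha v k (g - ![g₀, 0, 0] k)
    rw [sub_add_cancel] at this
    rw [← this]
    exact congrFun hv _

end Aux

/-- If `a = δ_{g₀} ⋆ ã` then the set of Hamming weights of vectors in
`ker(H_Z) \ rs(H_X)` is the same for the TT codes built from `(a, b, c)` and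
from `(ã, b, c)`; consequently the `X`-distance `d_X` is unchanged when the
common monomial factor is removed. -/
theorem tt_dX_invariant_of_monomial_factor {G : Type*} [AddCommGroup G]
    [Fintype G] [DecidableEq G] (a a' b c : G → ZMod 2) (g₀ : G)
    (h : a = conv (delta g₀) a') :
    {w : ℕ | ∃ v : Fin 3 × G → ZMod 2,
        ((TT_HZ a b c).mulVec v = 0 ∧ v ∉ rowSpace (TT_HX a b c)) ∧
          hammingNorm v = w} =
      {w : ℕ | ∃ v : Fin 3 × G → ZMod 2,
        ((TT_HZ a' b c).mulVec v = 0 ∧ v ∉ rowSpace (TT_HX a' b c)) ∧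
          hammingNorm v = w} ∧
    sInf {w : ℕ | ∃ v : Fin 3 × G → ZMod 2,
        ((TT_HZ a b c).mulVec v = 0 ∧ v ∉ rowSpace (TT_HX a b c)) ∧
          hammingNorm v = w} =
      sInf {w : ℕ | ∃ v : Fin 3 × G → ZMod 2,
        ((TT_HZ a' b c).mulVec v = 0 ∧ v ∉ rowSpace (TT_HX a' b c)) ∧
          hammingNorm v = w} := by
  have ha : ∀ x, a x = a' (x - g₀) := fun x => by rw [h]; exact conv_delta g₀ a' x
  have hset : {w : ℕ | ∃ v : Fin 3 × G → ZMod 2,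
        ((TT_HZ a b c).mulVec v = 0 ∧ v ∉ rowSpace (TT_HX a b c)) ∧
          hammingNorm v = w} =
      {w : ℕ | ∃ v : Fin 3 × G → ZMod 2,
        ((TT_HZ a' b c).mulVec v = 0 ∧ v ∉ rowSpace (TT_HX a' b c)) ∧
          hammingNorm v = w} := by
    ext w
    simp only [Set.mem_setOf_eq]
    constructor
    · rintro ⟨v, ⟨hk, hr⟩, rfl⟩
      exact ⟨v ∘ shiftEquiv g₀,
        ⟨(ker_iff a a' b c g₀ ha v).mp hk,
          fun hmem => hr ((mem_rs_iff a a' b c g₀ ha v).mpr hmem)⟩,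
        hn_comp_equiv (shiftEquiv g₀) v⟩
    · rintro ⟨v, ⟨hk, hr⟩, rfl⟩
      have hcomp : (v ∘ (shiftEquiv g₀).symm) ∘ (shiftEquiv g₀) = v := by
        funext i; simp
      refine ⟨v ∘ (shiftEquiv g₀).symm, ⟨?_, ?_⟩, ?_⟩
      · rw [ker_iff a a' b c g₀ ha, hcomp]; exact hk
      · intro hmem
        have := (mem_rs_iff a a' b c g₀ ha _).mp hmem
        rw [hcomp] at this
        exact hr this
      · exact hn_comp_equiv (shiftEquiv g₀).symm v
  exact ⟨hset, by rw [hset]⟩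
end
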